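/- Let Λ ⊂ ℝ² be a lattice invariant under the linear map A' = diag(e^γ, e^{−γ}) with γ > 0. Then the three transformations of ℝ³ given by g₁(x,y,θ) = (x+a₁, y+b₁, θ), g₂(x,y,θ) = (x+a₂, y+b₂, θ) (where (a₁,b₁), (a₂,b₂) generate Λ), and g₃(x,y,θ) = (e^γ x, e^{−γ} y, θ+γ) generate a group acting freely and properly discontinuously on ℝ³, satisfying the relations g₃ g_i g₃^{−1} = translation by A'(a_i, b_i) for i = 1, 2. -/

import Mathlib

open Real


lemma lat_fin (a₁ b₁ a₂ b₂ : ℝ)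
    (hindep : LinearIndependent ℝ ![((a₁, b₁) : ℝ × ℝ), (a₂, b₂)]) (C : ℝ) :
    {w : ℝ × ℝ | w ∈ AddSubgroup.closure {((a₁,b₁):ℝ×ℝ), (a₂,b₂)} ∧ |w.1| ≤ C ∧ |w.2| ≤ C}.Finite := by
  have hpair := LinearIndependent.pair_iff.mp hindep
  have hd : a₁*b₂ - a₂*b₁ ≠ 0 := by
    intro hd0
    have h1 := hpair b₂ (-b₁) (by
      simp only [Prod.ext_iff, Prod.smul_fst, Prod.smul_snd, Prod.fst_add, Prod.snd_add,
        smul_eq_mul, Prod.fst_zero, Prod.snd_zero]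
      constructor <;> nlinarith)
    have h2 := hpair a₂ (-a₁) (by
      simp only [Prod.ext_iff, Prod.smul_fst, Prod.smul_snd, Prod.fst_add, Prod.snd_add,
        smul_eq_mul, Prod.fst_zero, Prod.snd_zero]
      constructor <;> nlinarith)
    have h3 := hpair 1 0 (by
      simp only [Prod.ext_iff, Prod.smul_fst, Prod.smul_snd, Prod.fst_add, Prod.snd_add,
        smul_eq_mul, Prod.fst_zero, Prod.snd_zero]
      constructor <;> nlinarith [h1.1, h1.2, h2.1, h2.2])
    exact one_ne_zero h3.1
  have hmemc : ∀ w ∈ AddSubgroup.closure {((a₁,b₁):ℝ×ℝ),(a₂,b₂)},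
      ∃ m k : ℤ, w = m • ((a₁,b₁):ℝ×ℝ) + k • ((a₂,b₂):ℝ×ℝ) := by
    intro w hw
    induction hw using AddSubgroup.closure_induction with
    | mem x hx =>
      rcases hx with h | h
      · exact ⟨1, 0, by simp [h]⟩
      · exact ⟨0, 1, by simp at h; simp [h]⟩
    | zero => exact ⟨0, 0, by simp⟩
    | add x y hx hy ihx ihy =>
      obtain ⟨m, k, rfl⟩ := ihx
      obtain ⟨m', k', rfl⟩ := ihy
      refine ⟨m + m', k + k', ?_⟩
      simp only [Prod.ext_iff, Prod.smul_fst, Prod.smul_snd, Prod.fst_add, Prod.snd_add]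
      simp only [zsmul_eq_mul]
      push_cast
      constructor <;> ring
    | neg x hx ihx =>
      obtain ⟨m, k, rfl⟩ := ihx
      refine ⟨-m, -k, ?_⟩
      simp only [Prod.ext_iff, Prod.smul_fst, Prod.smul_snd, Prod.fst_add, Prod.snd_add, Prod.fst_neg, Prod.snd_neg]
      simp only [zsmul_eq_mul]
      push_cast
      constructor <;> ring
  set N : ℤ := ⌈|C| * (|a₁|+|b₁|+|a₂|+|b₂|) / |a₁*b₂ - a₂*b₁|⌉ with hN
  apply Set.Finite.subset (((Set.finite_Icc (-N) N).prod (Set.finite_Icc (-N) N)).image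
    (fun q : ℤ×ℤ => q.1 • ((a₁,b₁):ℝ×ℝ) + q.2 • ((a₂,b₂):ℝ×ℝ)))
  rintro w ⟨hwΛ, hw1, hw2⟩
  obtain ⟨m, k, hmk⟩ := hmemc w hwΛ
  have e1 : w.1 = (m:ℝ)*a₁ + (k:ℝ)*a₂ := by
    rw [hmk]; simp only [Prod.fst_add, Prod.smul_fst]; simp [zsmul_eq_mul]
  have e2 : w.2 = (m:ℝ)*b₁ + (k:ℝ)*b₂ := by
    rw [hmk]; simp only [Prod.snd_add, Prod.smul_snd]; simp [zsmul_eq_mul]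
  have habs : ∀ x y : ℝ, |x - y| ≤ |x| + |y| := fun x y => by
    calc |x - y| = |x + -y| := by rw [sub_eq_add_neg]
    _ ≤ |x| + |-y| := abs_add_le _ _
    _ = |x| + |y| := by rw [abs_neg]
  have hCn : C ≤ |C| := le_abs_self C
  have key : ∀ z : ℝ, |z| * |a₁*b₂ - a₂*b₁| ≤ |C| * (|a₁|+|b₁|+|a₂|+|b₂|) →
      -N ≤ ⌊(0:ℝ)⌋ ∨ True := fun _ _ => Or.inr trivial
  have bound : ∀ z : ℤ, |(z:ℝ)| * |a₁*b₂ - a₂*b₁| ≤ |C| * (|a₁|+|b₁|+|a₂|+|b₂|) →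
      -N ≤ z ∧ z ≤ N := by
    intro z hz
    have h1 : |(z:ℝ)| ≤ |C| * (|a₁|+|b₁|+|a₂|+|b₂|) / |a₁*b₂ - a₂*b₁| :=
      (le_div_iff₀ (abs_pos.mpr hd)).mpr hz
    have h2 : |(z:ℝ)| ≤ (N:ℝ) := h1.trans (Int.le_ceil _)
    have h3 := abs_le.mp h2
    constructor
    · exact_mod_cast h3.1
    · exact_mod_cast h3.2
  have hm : -N ≤ m ∧ m ≤ N := by
    apply bound
    have hmd : (m:ℝ) * (a₁*b₂ - a₂*b₁) = w.1*b₂ - w.2*a₂ := by rw [e1, e2]; ring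
    have : |(m:ℝ)| * |a₁*b₂ - a₂*b₁| = |w.1*b₂ - w.2*a₂| := by rw [← abs_mul, hmd]
    rw [this]
    have ht := habs (w.1*b₂) (w.2*a₂)
    have h1 : |w.1*b₂| ≤ |C| * |b₂| := by
      rw [abs_mul]; exact mul_le_mul_of_nonneg_right (hw1.trans hCn) (abs_nonneg _)
    have h2 : |w.2*a₂| ≤ |C| * |a₂| := by
      rw [abs_mul]; exact mul_le_mul_of_nonneg_right (hw2.trans hCn) (abs_nonneg _)
    nlinarith [abs_nonneg C, abs_nonneg a₁, abs_nonneg b₁]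
  have hk : -N ≤ k ∧ k ≤ N := by
    apply bound
    have hkd : (k:ℝ) * (a₁*b₂ - a₂*b₁) = w.2*a₁ - w.1*b₁ := by rw [e1, e2]; ring
    have : |(k:ℝ)| * |a₁*b₂ - a₂*b₁| = |w.2*a₁ - w.1*b₁| := by rw [← abs_mul, hkd]
    rw [this]
    have ht := habs (w.2*a₁) (w.1*b₁)
    have h1 : |w.2*a₁| ≤ |C| * |a₁| := by
      rw [abs_mul]; exact mul_le_mul_of_nonneg_right (hw2.trans hCn) (abs_nonneg _)
    have h2 : |w.1*b₁| ≤ |C| * |b₁| := by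
      rw [abs_mul]; exact mul_le_mul_of_nonneg_right (hw1.trans hCn) (abs_nonneg _)
    nlinarith [abs_nonneg C, abs_nonneg a₂, abs_nonneg b₂]
  exact ⟨(m, k), ⟨Set.mem_Icc.mpr hm, Set.mem_Icc.mpr hk⟩, hmk.symm⟩

/-- Let `Λ ⊂ ℝ²` be a lattice generated by linearly independent vectors `(a₁,b₁)`,
`(a₂,b₂)`, invariant under `A' = diag(e^γ, e^{-γ})` with `γ > 0`. Then the
transformations `g₁(x,y,θ) = (x+a₁, y+b₁, θ)`, `g₂(x,y,θ) = (x+a₂, y+b₂, θ)`,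
`g₃(x,y,θ) = (e^γ x, e^{-γ} y, θ+γ)` satisfy `g₃ gᵢ g₃⁻¹ = ` translation by
`A'(aᵢ, bᵢ)` for `i = 1, 2`, and the group they generate acts freely and properly
discontinuously on `ℝ³`. -/
theorem stmt_15 (γ a₁ b₁ a₂ b₂ : ℝ) (hγ : 0 < γ)
    (hindep : LinearIndependent ℝ ![((a₁, b₁) : ℝ × ℝ), (a₂, b₂)])
    (hΛinv : (fun v : ℝ × ℝ => (Real.exp γ * v.1, Real.exp (-γ) * v.2)) ''
        (AddSubgroup.closure {((a₁, b₁) : ℝ × ℝ), (a₂, b₂)} : AddSubgroup (ℝ × ℝ))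
      = (AddSubgroup.closure {((a₁, b₁) : ℝ × ℝ), (a₂, b₂)} : AddSubgroup (ℝ × ℝ)))
    (g₁ g₂ g₃ : Equiv.Perm (ℝ × ℝ × ℝ))
    (hg₁ : ∀ p : ℝ × ℝ × ℝ, g₁ p = (p.1 + a₁, p.2.1 + b₁, p.2.2))
    (hg₂ : ∀ p : ℝ × ℝ × ℝ, g₂ p = (p.1 + a₂, p.2.1 + b₂, p.2.2))
    (hg₃ : ∀ p : ℝ × ℝ × ℝ, g₃ p = (Real.exp γ * p.1, Real.exp (-γ) * p.2.1, p.2.2 + γ)) :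
    (∀ p : ℝ × ℝ × ℝ, (g₃ * g₁ * g₃⁻¹) p
        = (p.1 + Real.exp γ * a₁, p.2.1 + Real.exp (-γ) * b₁, p.2.2)) ∧
    (∀ p : ℝ × ℝ × ℝ, (g₃ * g₂ * g₃⁻¹) p
        = (p.1 + Real.exp γ * a₂, p.2.1 + Real.exp (-γ) * b₂, p.2.2)) ∧
    (∀ g ∈ Subgroup.closure {g₁, g₂, g₃}, g ≠ 1 → ∀ p : ℝ × ℝ × ℝ, g p ≠ p) ∧
    (∀ K : Set (ℝ × ℝ × ℝ), IsCompact K →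
      {g : Equiv.Perm (ℝ × ℝ × ℝ) |
        g ∈ Subgroup.closure {g₁, g₂, g₃} ∧ (g '' K ∩ K).Nonempty}.Finite) := by
  have hee : Real.exp γ * Real.exp (-γ) = 1 := by rw [← Real.exp_add]; simp
  have hee' : Real.exp (-γ) * Real.exp γ = 1 := by rw [← Real.exp_add]; simp
  -- inverse of g₃
  have hg₃inv : ∀ p : ℝ × ℝ × ℝ,
      g₃⁻¹ p = (Real.exp (-γ) * p.1, Real.exp γ * p.2.1, p.2.2 - γ) := by
    intro p
    obtain ⟨px, py, pθ⟩ := p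
    apply g₃.injective
    rw [Equiv.Perm.coe_inv, Equiv.apply_symm_apply, hg₃]
    simp only [Prod.mk.injEq]
    refine ⟨?_, ?_, ?_⟩
    · rw [← mul_assoc, hee]; ring
    · rw [← mul_assoc, hee']; ring
    · ring
  -- Parts 1 and 2
  have part1 : ∀ p : ℝ × ℝ × ℝ, (g₃ * g₁ * g₃⁻¹) p
      = (p.1 + Real.exp γ * a₁, p.2.1 + Real.exp (-γ) * b₁, p.2.2) := by
    intro p
    obtain ⟨px, py, pθ⟩ := p
    simp only [Equiv.Perm.mul_apply, hg₃inv, hg₁, hg₃]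
    simp only [Prod.mk.injEq]
    refine ⟨?_, ?_, ?_⟩
    · rw [mul_add, ← mul_assoc, hee]; ring
    · rw [mul_add, ← mul_assoc, hee']; ring
    · ring
  have part2 : ∀ p : ℝ × ℝ × ℝ, (g₃ * g₂ * g₃⁻¹) p
      = (p.1 + Real.exp γ * a₂, p.2.1 + Real.exp (-γ) * b₂, p.2.2) := by
    intro p
    obtain ⟨px, py, pθ⟩ := p
    simp only [Equiv.Perm.mul_apply, hg₃inv, hg₂, hg₃]
    simp only [Prod.mk.injEq]
    refine ⟨?_, ?_, ?_⟩
    · rw [mul_add, ← mul_assoc, hee]; ring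
    · rw [mul_add, ← mul_assoc, hee']; ring
    · ring
  -- Λ stability under A' and its inverse
  have hfor : ∀ w : ℝ × ℝ, w ∈ AddSubgroup.closure {((a₁,b₁):ℝ×ℝ), (a₂,b₂)} →
      (Real.exp γ * w.1, Real.exp (-γ) * w.2) ∈
        AddSubgroup.closure {((a₁,b₁):ℝ×ℝ), (a₂,b₂)} := by
    intro w hw
    have : (Real.exp γ * w.1, Real.exp (-γ) * w.2) ∈
        (fun v : ℝ × ℝ => (Real.exp γ * v.1, Real.exp (-γ) * v.2)) ''
          (AddSubgroup.closure {((a₁,b₁):ℝ×ℝ), (a₂,b₂)} : AddSubgroup (ℝ × ℝ)) :=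
      ⟨w, hw, rfl⟩
    rw [hΛinv] at this
    exact this
  have hback : ∀ w : ℝ × ℝ, w ∈ AddSubgroup.closure {((a₁,b₁):ℝ×ℝ), (a₂,b₂)} →
      (Real.exp (-γ) * w.1, Real.exp γ * w.2) ∈
        AddSubgroup.closure {((a₁,b₁):ℝ×ℝ), (a₂,b₂)} := by
    intro w hw
    have hw' : w ∈ (fun v : ℝ × ℝ => (Real.exp γ * v.1, Real.exp (-γ) * v.2)) ''
          (AddSubgroup.closure {((a₁,b₁):ℝ×ℝ), (a₂,b₂)} : AddSubgroup (ℝ × ℝ)) := by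
      rw [hΛinv]; exact hw
    obtain ⟨z, hz, hzw⟩ := hw'
    have hz1 : Real.exp (-γ) * w.1 = z.1 := by
      rw [← hzw]; simp only; rw [← mul_assoc, hee']; ring
    have hz2 : Real.exp γ * w.2 = z.2 := by
      rw [← hzw]; simp only; rw [← mul_assoc, hee]; ring
    rw [hz1, hz2]
    exact hz
  -- Λ stability under integer powers of A'
  have hpow : ∀ n : ℤ, ∀ w : ℝ × ℝ, w ∈ AddSubgroup.closure {((a₁,b₁):ℝ×ℝ), (a₂,b₂)} →
      (Real.exp ((n:ℝ)*γ) * w.1, Real.exp (-((n:ℝ)*γ)) * w.2) ∈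
        AddSubgroup.closure {((a₁,b₁):ℝ×ℝ), (a₂,b₂)} := by
    intro n
    induction n using Int.induction_on with
    | zero => intro w hw; simpa using hw
    | succ n ih =>
      intro w hw
      have h := hfor _ (ih w hw)
      have e1 : Real.exp (((n:ℤ)+1:ℤ) * γ : ℝ) = Real.exp γ * Real.exp ((n:ℝ)*γ) := by
        rw [← Real.exp_add]; push_cast; ring_nf
      have e2 : Real.exp (-(((n:ℤ)+1:ℤ) * γ : ℝ)) = Real.exp (-γ) * Real.exp (-((n:ℝ)*γ)) := by
        rw [← Real.exp_add]; push_cast; ring_nf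
      push_cast
      push_cast at e1 e2
      rw [e1, e2, mul_assoc, mul_assoc]
      exact h
    | pred n ih =>
      intro w hw
      have h := hback _ (ih w hw)
      push_cast at h
      push_cast
      have e1 : Real.exp ((-(n:ℝ)-1) * γ) = Real.exp (-γ) * Real.exp ((-(n:ℝ))*γ) := by
        rw [← Real.exp_add]; ring_nf
      have e2 : Real.exp (-((-(n:ℝ)-1) * γ)) = Real.exp γ * Real.exp (-((-(n:ℝ))*γ)) := by
        rw [← Real.exp_add]; ring_nf
      rw [e1, e2, mul_assoc, mul_assoc]
      exact h
  -- normal form of elements of the group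
  have hform : ∀ g ∈ Subgroup.closure {g₁, g₂, g₃}, ∃ (n : ℤ) (u v : ℝ),
      ((u, v) ∈ AddSubgroup.closure {((a₁,b₁):ℝ×ℝ), (a₂,b₂)}) ∧
      ∀ p : ℝ × ℝ × ℝ, g p = (Real.exp ((n:ℝ)*γ) * p.1 + u,
        Real.exp (-((n:ℝ)*γ)) * p.2.1 + v, p.2.2 + (n:ℝ)*γ) := by
    intro g hg
    induction hg using Subgroup.closure_induction with
    | mem x hx =>
      rcases hx with h | h | h
      · refine ⟨0, a₁, b₁, AddSubgroup.subset_closure (by left; rfl), ?_⟩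
        intro p; rw [h, hg₁]; simp
      · refine ⟨0, a₂, b₂, AddSubgroup.subset_closure (by right; rfl), ?_⟩
        intro p; rw [h, hg₂]; simp
      · refine ⟨1, 0, 0, zero_mem _, ?_⟩
        intro p; rw [h, hg₃]; simp
    | one => exact ⟨0, 0, 0, zero_mem _, by simp⟩
    | mul x y hx hy ihx ihy =>
      obtain ⟨n, u, v, hmem, hfx⟩ := ihx
      obtain ⟨n', u', v', hmem', hfy⟩ := ihy
      refine ⟨n + n', Real.exp ((n:ℝ)*γ) * u' + u, Real.exp (-((n:ℝ)*γ)) * v' + v, ?_, ?_⟩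
      · have h1 := hpow n (u', v') hmem'
        have h2 := add_mem h1 hmem
        simpa using h2
      · intro p
        rw [Equiv.Perm.mul_apply, hfy, hfx]
        simp only [Prod.mk.injEq]
        push_cast
        refine ⟨?_, ?_, ?_⟩
        · rw [show ((n:ℝ) + (n':ℝ)) * γ = (n:ℝ)*γ + (n':ℝ)*γ by ring, Real.exp_add]; ring
        · rw [show -(((n:ℝ) + (n':ℝ)) * γ) = -((n:ℝ)*γ) + -((n':ℝ)*γ) by ring, Real.exp_add]
          ring
        · ring
    | inv x hx ihx =>
      obtain ⟨n, u, v, hmem, hfx⟩ := ihx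
      have heN : Real.exp ((n:ℝ)*γ) * Real.exp (-((n:ℝ)*γ)) = 1 := by
        rw [← Real.exp_add]; simp
      have heN' : Real.exp (-((n:ℝ)*γ)) * Real.exp ((n:ℝ)*γ) = 1 := by
        rw [← Real.exp_add]; simp
      refine ⟨-n, -(Real.exp (-((n:ℝ)*γ)) * u), -(Real.exp ((n:ℝ)*γ) * v), ?_, ?_⟩
      · have h1 := hpow (-n) (u, v) hmem
        have h2 := neg_mem h1
        push_cast at h2
        have e : (-(Real.exp (-((n:ℝ)*γ)) * u), -(Real.exp ((n:ℝ)*γ) * v))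
            = -(Real.exp (-(n:ℝ)*γ) * u, Real.exp (-(-(n:ℝ)*γ)) * v) := by
          simp only [Prod.neg_mk, Prod.mk.injEq]
          constructor
          · rw [show (-(n:ℝ))*γ = -((n:ℝ)*γ) by ring]
          · rw [show -(-(n:ℝ)*γ) = (n:ℝ)*γ by ring]
        rw [e]
        exact h2
      · intro p
        obtain ⟨px, py, pθ⟩ := p
        have key : x (Real.exp (((-n : ℤ) : ℝ) * γ) * px + -(Real.exp (-((n:ℝ)*γ)) * u),
            Real.exp (-(((-n : ℤ) : ℝ) * γ)) * py + -(Real.exp ((n:ℝ)*γ) * v),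
            pθ + ((-n : ℤ) : ℝ) * γ) = (px, py, pθ) := by
          rw [hfx]
          simp only [Prod.mk.injEq]
          push_cast
          refine ⟨?_, ?_, ?_⟩
          · rw [mul_add, ← mul_assoc, show (-(n:ℝ))*γ = -((n:ℝ)*γ) by ring, heN]
            rw [mul_neg, ← mul_assoc, heN]; ring
          · rw [mul_add, ← mul_assoc, show -(-(n:ℝ)*γ) = (n:ℝ)*γ by ring, heN']
            rw [mul_neg, ← mul_assoc, heN']; ring
          · ring
        apply x.injective
        rw [Equiv.Perm.coe_inv, Equiv.apply_symm_apply]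
        exact key.symm
  -- Part 3: freeness
  have part3 : ∀ g ∈ Subgroup.closure {g₁, g₂, g₃}, g ≠ 1 → ∀ p : ℝ × ℝ × ℝ, g p ≠ p := by
    intro g hg hne p hp
    obtain ⟨n, u, v, hmem, hf⟩ := hform g hg
    have h := hf p
    rw [hp] at h
    have h3 : p.2.2 = p.2.2 + (n:ℝ)*γ := congrArg (fun q : ℝ×ℝ×ℝ => q.2.2) h
    have hn0 : (n:ℝ) = 0 := by
      have : (n:ℝ)*γ = 0 := by linarith
      rcases mul_eq_zero.mp this with h' | h'
      · exact h'
      · exact absurd h' (ne_of_gt hγ)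
    have hnz : n = 0 := by exact_mod_cast hn0
    subst hnz
    simp only [Int.cast_zero, zero_mul, Real.exp_zero, one_mul, neg_zero, add_zero] at h hf
    have hu : u = 0 := by
      have := congrArg (fun q : ℝ×ℝ×ℝ => q.1) h
      simp at this; linarith
    have hv : v = 0 := by
      have := congrArg (fun q : ℝ×ℝ×ℝ => q.2.1) h
      simp at this; linarith
    apply hne
    apply Equiv.ext
    intro q
    rw [hf q, hu, hv]
    simp
  have part4 : ∀ K : Set (ℝ × ℝ × ℝ), IsCompact K →
      {g : Equiv.Perm (ℝ × ℝ × ℝ) |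
        g ∈ Subgroup.closure {g₁, g₂, g₃} ∧ (g '' K ∩ K).Nonempty}.Finite := by
    intro K hK
    have habs : ∀ x y : ℝ, |x - y| ≤ |x| + |y| := fun x y => by
      calc |x - y| = |x + -y| := by rw [sub_eq_add_neg]
      _ ≤ |x| + |-y| := abs_add_le _ _
      _ = |x| + |y| := by rw [abs_neg]
    obtain ⟨r0, hr0⟩ := hK.isBounded.subset_closedBall 0
    set r : ℝ := max r0 0 with hrdef
    have hr : K ⊆ Metric.closedBall 0 r :=
      hr0.trans (Metric.closedBall_subset_closedBall (le_max_left _ _))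
    have hrnn : 0 ≤ r := le_max_right _ _
    have hbound : ∀ p ∈ K, |p.1| ≤ r ∧ |p.2.1| ≤ r ∧ |p.2.2| ≤ r := by
      intro p hp
      have h := Metric.mem_closedBall.mp (hr hp)
      rw [dist_zero_right] at h
      have h1 : ‖p.1‖ ≤ ‖p‖ := norm_fst_le p
      have h2 : ‖p.2‖ ≤ ‖p‖ := norm_snd_le p
      have h21 : ‖p.2.1‖ ≤ ‖p.2‖ := norm_fst_le p.2
      have h22 : ‖p.2.2‖ ≤ ‖p.2‖ := norm_snd_le p.2
      simp only [Real.norm_eq_abs] at h1 h2 h21 h22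
      exact ⟨h1.trans h, (h21.trans h2).trans h, (h22.trans h2).trans h⟩
    set N : ℤ := ⌈2 * r / γ⌉ with hNdef
    set E : ℝ := Real.exp ((N:ℝ) * γ) * r + r with hEdef
    have hexp : ∀ n : ℤ, |n| ≤ N → Real.exp ((n:ℝ)*γ) ≤ Real.exp ((N:ℝ)*γ) ∧
        Real.exp (-((n:ℝ)*γ)) ≤ Real.exp ((N:ℝ)*γ) := by
      intro n hn
      have h1 : (n:ℝ) ≤ (N:ℝ) := by exact_mod_cast (le_abs_self n).trans hn
      have h2 : -(n:ℝ) ≤ (N:ℝ) := by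
        have h := (neg_le_abs n).trans hn
        exact_mod_cast h
      refine ⟨Real.exp_le_exp.mpr (mul_le_mul_of_nonneg_right h1 hγ.le), ?_⟩
      exact Real.exp_le_exp.mpr (by nlinarith)
    apply Set.Finite.of_finite_image
      (f := fun g : Equiv.Perm (ℝ×ℝ×ℝ) => g ((0:ℝ), (0:ℝ), (0:ℝ)))
    · apply Set.Finite.subset (((lat_fin a₁ b₁ a₂ b₂ hindep E).prod
        (Set.finite_Icc (-N) N)).image
        (fun q : (ℝ × ℝ) × ℤ => ((q.1.1 : ℝ), (q.1.2 : ℝ), ((q.2:ℝ) * γ : ℝ))))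
      rintro z ⟨g, ⟨hgcl, q0, ⟨⟨p, hpK, hgp⟩, hq0K⟩⟩, rfl⟩
      obtain ⟨n, u, v, hmem, hf⟩ := hform g hgcl
      obtain ⟨hp1, hp21, hp22⟩ := hbound p hpK
      have hq0eq : q0 = (Real.exp ((n:ℝ)*γ) * p.1 + u,
          Real.exp (-((n:ℝ)*γ)) * p.2.1 + v, p.2.2 + (n:ℝ)*γ) := by
        rw [← hgp, hf p]
      have hq := hbound q0 hq0K
      rw [hq0eq] at hq
      have hq1 : |Real.exp ((n:ℝ)*γ) * p.1 + u| ≤ r := hq.1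
      have hq21 : |Real.exp (-((n:ℝ)*γ)) * p.2.1 + v| ≤ r := hq.2.1
      have hq22 : |p.2.2 + (n:ℝ)*γ| ≤ r := hq.2.2
      have hnb : |n| ≤ N := by
        have h1 : |(n:ℝ)*γ| ≤ 2*r := by
          calc |(n:ℝ)*γ| = |(p.2.2 + (n:ℝ)*γ) - p.2.2| := by congr 1; ring
          _ ≤ |p.2.2 + (n:ℝ)*γ| + |p.2.2| := habs _ _
          _ ≤ 2*r := by linarith
        have h2 : |(n:ℝ)| * γ ≤ 2*r := by rwa [abs_mul, abs_of_pos hγ] at h1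
        have h3 : |(n:ℝ)| ≤ 2*r/γ := (le_div_iff₀ hγ).mpr h2
        have h4 : ((|n|:ℤ):ℝ) ≤ (N:ℝ) := by
          rw [Int.cast_abs]
          exact h3.trans (Int.le_ceil _)
        exact_mod_cast h4
      obtain ⟨he1, he2⟩ := hexp n hnb
      have hu : |u| ≤ E := by
        have h1 : |u| ≤ r + |Real.exp ((n:ℝ)*γ) * p.1| := by
          calc |u| = |(Real.exp ((n:ℝ)*γ) * p.1 + u) - Real.exp ((n:ℝ)*γ) * p.1| := by
                congr 1; ring
          _ ≤ |Real.exp ((n:ℝ)*γ) * p.1 + u| + |Real.exp ((n:ℝ)*γ) * p.1| := habs _ _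
          _ ≤ r + |Real.exp ((n:ℝ)*γ) * p.1| := by linarith
        have h2 : |Real.exp ((n:ℝ)*γ) * p.1| ≤ Real.exp ((N:ℝ)*γ) * r := by
          rw [abs_mul, abs_of_pos (Real.exp_pos _)]
          exact mul_le_mul he1 hp1 (abs_nonneg _) (Real.exp_pos _).le
        rw [hEdef]
        linarith
      have hv : |v| ≤ E := by
        have h1 : |v| ≤ r + |Real.exp (-((n:ℝ)*γ)) * p.2.1| := by
          calc |v| = |(Real.exp (-((n:ℝ)*γ)) * p.2.1 + v)
              - Real.exp (-((n:ℝ)*γ)) * p.2.1| := by congr 1; ring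
          _ ≤ |Real.exp (-((n:ℝ)*γ)) * p.2.1 + v| + |Real.exp (-((n:ℝ)*γ)) * p.2.1| :=
              habs _ _
          _ ≤ r + |Real.exp (-((n:ℝ)*γ)) * p.2.1| := by linarith
        have h2 : |Real.exp (-((n:ℝ)*γ)) * p.2.1| ≤ Real.exp ((N:ℝ)*γ) * r := by
          rw [abs_mul, abs_of_pos (Real.exp_pos _)]
          exact mul_le_mul he2 hp21 (abs_nonneg _) (Real.exp_pos _).le
        rw [hEdef]
        linarith
      refine ⟨((u, v), n), ⟨⟨hmem, hu, hv⟩, Set.mem_Icc.mpr (abs_le.mp hnb)⟩, ?_⟩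
      show ((u, v).1, (u, v).2, ((n:ℤ):ℝ) * γ) = g ((0:ℝ), (0:ℝ), (0:ℝ))
      rw [hf ((0:ℝ), (0:ℝ), (0:ℝ))]
      simp
    · rintro g ⟨hgcl, -⟩ g' ⟨hgcl', -⟩ heq
      obtain ⟨n, u, v, -, hf⟩ := hform g hgcl
      obtain ⟨n', u', v', -, hf'⟩ := hform g' hgcl'
      have h0 : g ((0:ℝ), (0:ℝ), (0:ℝ)) = g' ((0:ℝ), (0:ℝ), (0:ℝ)) := heq
      rw [hf ((0:ℝ), (0:ℝ), (0:ℝ)), hf' ((0:ℝ), (0:ℝ), (0:ℝ))] at h0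
      simp only [mul_zero, zero_add, Prod.mk.injEq] at h0
      obtain ⟨hu, hv, hn⟩ := h0
      have hnn : n = n' := by
        have : (n:ℝ) = (n':ℝ) := mul_right_cancel₀ (ne_of_gt hγ) hn
        exact_mod_cast this
      subst hnn
      apply Equiv.ext
      intro q
      rw [hf q, hf' q, hu, hv]
  exact ⟨part1, part2, part3, part4⟩
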